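/- arXiv:1512.08090 — 3 statements merged into one kernel-verified Lean document; each statement's English description precedes it below -/
import Mathlib

section
/- Let q ≥ 3 be an integer and Γ_q the Hecke triangle group in SL(2,ℝ). Then every hyperbolic element of Γ_q is, up to sign, Γ_q-conjugate to a reduced element: for every g ∈ Γ_q with |tr g| > 2 there exist h ∈ Γ_q and ε ∈ {1, −1} such that g' := ε·h·g·h⁻¹ satisfies tr g' > 2, the lower-left entry of g' is nonzero, and w_a(g') > 0 > w_r(g'). -/
noncomputable section

abbrev SL2 := Matrix.SpecialLinearGroup (Fin 2) ℝ

/-- `S = [[0,1],[−1,0]] ∈ SL(2,ℝ)`. -/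
def Smat : SL2 := ⟨!![0, 1; -1, 0], by norm_num [Matrix.det_fin_two_of]⟩

/-- `T_q = [[1, λ_q],[0,1]] ∈ SL(2,ℝ)` where `λ_q = 2cos(π/q)`. -/
def Tmat (q : ℕ) : SL2 :=
  ⟨!![1, 2 * Real.cos (Real.pi / q); 0, 1], by norm_num [Matrix.det_fin_two_of]⟩

/-- The Hecke triangle group `Γ_q ≤ SL(2,ℝ)`, generated by `S` and `T_q`. -/
def Hecke (q : ℕ) : Subgroup SL2 := Subgroup.closure {Smat, Tmat q}

/-- Trace of an element of `SL(2,ℝ)`. -/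
def trc (g : SL2) : ℝ := g.1 0 0 + g.1 1 1

/-- `λ₊(g) = (tr g + √((tr g)² − 4))/2`. -/
def lamP (g : SL2) : ℝ := (trc g + Real.sqrt ((trc g) ^ 2 - 4)) / 2

/-- `λ₋(g) = (tr g − √((tr g)² − 4))/2`. -/
def lamM (g : SL2) : ℝ := (trc g - Real.sqrt ((trc g) ^ 2 - 4)) / 2

/-- Attracting fixed point `w_a(g) = (λ₊(g) − d)/c` of a hyperbolic `g` with `c ≠ 0`. -/
def wA (g : SL2) : ℝ := (lamP g - g.1 1 1) / g.1 1 0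

/-- Repelling fixed point `w_r(g) = (λ₋(g) − d)/c` of a hyperbolic `g` with `c ≠ 0`. -/
def wR (g : SL2) : ℝ := (lamM g - g.1 1 1) / g.1 1 0

def tau (s : ℝ) : SL2 := ⟨!![1, s; 0, 1], by norm_num [Matrix.det_fin_two_of]⟩

lemma SL2.mul_entry (A B : SL2) (i j : Fin 2) :
    (A * B).1 i j = A.1 i 0 * B.1 0 j + A.1 i 1 * B.1 1 j := by
  rw [Matrix.SpecialLinearGroup.coe_mul, Matrix.mul_apply, Fin.sum_univ_two]

lemma SL2.det_entry (M : SL2) : M.1 0 0 * M.1 1 1 - M.1 0 1 * M.1 1 0 = 1 := by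
  have := M.2
  rwa [Matrix.det_fin_two] at this

lemma tau_mul (s t : ℝ) : tau s * tau t = tau (s + t) := by
  apply Subtype.ext
  ext i j
  fin_cases i <;> fin_cases j <;>
    (rw [SL2.mul_entry]; simp [SL2.mul_entry, tau]; try ring)

lemma tau_zero : tau 0 = 1 := by
  apply Subtype.ext
  simp [tau, Matrix.one_fin_two]

lemma tau_inv (s : ℝ) : (tau s)⁻¹ = tau (-s) := by
  apply inv_eq_of_mul_eq_one_right
  rw [tau_mul, add_neg_cancel, tau_zero]

lemma tau_pow (s : ℝ) (n : ℕ) : tau s ^ n = tau (n * s) := by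
  induction n with
  | zero => simp [tau_zero]
  | succ n ih => rw [pow_succ, ih, tau_mul]; push_cast; ring_nf

lemma tau_zpow (s : ℝ) (n : ℤ) : tau s ^ n = tau (n * s) := by
  cases n with
  | ofNat n => rw [Int.ofNat_eq_coe, zpow_natCast, tau_pow]; norm_num
  | negSucc n =>
      rw [zpow_negSucc, tau_pow, tau_inv]
      congr 1
      push_cast; ring


def Gam (L : ℝ) : Subgroup SL2 := Subgroup.closure {Smat, tau L}

lemma Smat_mem (L : ℝ) : Smat ∈ Gam L :=
  Subgroup.subset_closure (Set.mem_insert _ _)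

lemma tauL_mem (L : ℝ) : tau L ∈ Gam L :=
  Subgroup.subset_closure (Set.mem_insert_of_mem _ rfl)

lemma tau_zmul_mem (L : ℝ) (n : ℤ) : tau ((n : ℝ) * L) ∈ Gam L := by
  rw [← tau_zpow]
  exact zpow_mem (tauL_mem L) n

-- conjugation by tau s : entries
lemma conj_tau_a (M : SL2) (s : ℝ) :
    (tau s * M * (tau s)⁻¹).1 0 0 = M.1 0 0 + s * M.1 1 0 := by
  rw [tau_inv]
  rw [SL2.mul_entry, SL2.mul_entry, SL2.mul_entry];
  simp [SL2.mul_entry, tau]; try ring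

lemma conj_tau_b (M : SL2) (s : ℝ) :
    (tau s * M * (tau s)⁻¹).1 0 1
      = M.1 0 1 + s * (M.1 1 1 - M.1 0 0) - s ^ 2 * M.1 1 0 := by
  rw [tau_inv]
  rw [SL2.mul_entry, SL2.mul_entry, SL2.mul_entry];
  simp [SL2.mul_entry, tau]; try ring

lemma conj_tau_c (M : SL2) (s : ℝ) :
    (tau s * M * (tau s)⁻¹).1 1 0 = M.1 1 0 := by
  rw [tau_inv]
  rw [SL2.mul_entry, SL2.mul_entry, SL2.mul_entry];
  simp [SL2.mul_entry, tau]

lemma conj_tau_d (M : SL2) (s : ℝ) :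
    (tau s * M * (tau s)⁻¹).1 1 1 = M.1 1 1 - s * M.1 1 0 := by
  rw [tau_inv]
  rw [SL2.mul_entry, SL2.mul_entry, SL2.mul_entry];
  simp [SL2.mul_entry, tau]; try ring

lemma Smat_inv : Smat⁻¹ = ⟨!![0, -1; 1, 0], by norm_num [Matrix.det_fin_two_of]⟩ := by
  apply inv_eq_of_mul_eq_one_right
  apply Subtype.ext
  ext i j
  fin_cases i <;> fin_cases j <;>
    (erw [SL2.mul_entry]; simp [SL2.mul_entry, Smat]; try ring)

lemma conj_S_a (M : SL2) : (Smat * M * Smat⁻¹).1 0 0 = M.1 1 1 := by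
  rw [SL2.mul_entry, SL2.mul_entry, SL2.mul_entry, Smat_inv]; simp [SL2.mul_entry, Smat]

lemma conj_S_b (M : SL2) : (Smat * M * Smat⁻¹).1 0 1 = -M.1 1 0 := by
  rw [SL2.mul_entry, SL2.mul_entry, SL2.mul_entry, Smat_inv]; simp [SL2.mul_entry, Smat]

lemma conj_S_c (M : SL2) : (Smat * M * Smat⁻¹).1 1 0 = -M.1 0 1 := by
  rw [SL2.mul_entry, SL2.mul_entry, SL2.mul_entry, Smat_inv]; simp [SL2.mul_entry, Smat]

lemma conj_S_d (M : SL2) : (Smat * M * Smat⁻¹).1 1 1 = M.1 0 0 := by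
  rw [SL2.mul_entry, SL2.mul_entry, SL2.mul_entry, Smat_inv]; simp [SL2.mul_entry, Smat]

lemma trc_eq_trace (M : SL2) : trc M = Matrix.trace M.1 := by
  rw [Matrix.trace_fin_two]; rfl

lemma trc_conj (h M : SL2) : trc (h * M * h⁻¹) = trc M := by
  rw [trc_eq_trace, trc_eq_trace]
  have : ((h * M * h⁻¹ : SL2) : Matrix (Fin 2) (Fin 2) ℝ) = (h.1 * M.1) * (h⁻¹).1 := by
    simp [Matrix.SpecialLinearGroup.coe_mul]
  rw [this, Matrix.trace_mul_comm]
  have h2 : (h⁻¹).1 * h.1 = 1 := by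
    rw [← Matrix.SpecialLinearGroup.coe_mul, inv_mul_cancel,
      Matrix.SpecialLinearGroup.coe_one]
  rw [← Matrix.mul_assoc, h2, Matrix.one_mul]


/-- Reducedness predicate matching the theorem's conclusion. -/
def Red (M : SL2) : Prop :=
  trc M > 2 ∧ M.1 1 0 ≠ 0 ∧ wA M > 0 ∧ 0 > wR M

/-- The bridge: positive trace, `b > 0`, `c > 0` imply reduced. -/
lemma red_of (M : SL2) (ht : 2 < trc M) (hb : 0 < M.1 0 1) (hc : 0 < M.1 1 0) :
    Red M := by
  set a := M.1 0 0 with ha'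
  set b := M.1 0 1 with hb'
  set c := M.1 1 0 with hc'
  set d := M.1 1 1 with hd'
  have hdet : a * d - b * c = 1 := SL2.det_entry M
  have htr : trc M = a + d := rfl
  set t := trc M with htt
  have hD : 0 < t ^ 2 - 4 := by nlinarith
  have hsq : Real.sqrt (t ^ 2 - 4) ^ 2 = t ^ 2 - 4 := Real.sq_sqrt hD.le
  have hsP : 0 < Real.sqrt (t ^ 2 - 4) := Real.sqrt_pos.2 hD
  set r := Real.sqrt (t ^ 2 - 4) with hr'
  -- (d - lamM)(d - lamP) = d^2 - t d + 1 = 1 - a d = -(b c) < 0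
  have key : (d - (t - r) / 2) * (d - (t + r) / 2) = -(b * c) := by
    have : (d - (t - r) / 2) * (d - (t + r) / 2) = d ^ 2 - t * d + (t ^ 2 - r ^ 2) / 4 := by
      ring
    rw [this, hsq, htr]
    ring_nf
    nlinarith [hdet]
  have hbc : 0 < b * c := mul_pos hb hc
  have hprod : (d - (t - r) / 2) * (d - (t + r) / 2) < 0 := by
    rw [key]; linarith
  have hdP : d < (t + r) / 2 := by nlinarith
  have hdM : (t - r) / 2 < d := by nlinarith
  refine ⟨ht, ne_of_gt hc, ?_, ?_⟩
  · have : 0 < lamP M - d := by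
      have : lamP M = (t + r) / 2 := rfl
      rw [this]; linarith
    exact div_pos this hc
  · have hn : lamM M - d < 0 := by
      have : lamM M = (t - r) / 2 := rfl
      rw [this]; linarith
    exact div_neg_of_neg_of_pos hn hc

/-- If a translation `tau s` in the group brings the "vertex" close enough, we can reduce. -/
lemma fin_of_s (L : ℝ) (M : SL2) (ht : 2 < trc M) (s : ℝ) (hs : tau s ∈ Gam L)
    (hlt : (2 * M.1 1 0 * s - (M.1 1 1 - M.1 0 0)) ^ 2 < trc M ^ 2 - 4) :
    ∃ h ∈ Gam L, Red (h * M * h⁻¹) := by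
  set a := M.1 0 0
  set b := M.1 0 1
  set c := M.1 1 0
  set d := M.1 1 1
  have hdet : a * d - b * c = 1 := SL2.det_entry M
  have htr : trc M = a + d := rfl
  set E := b + s * (d - a) - s ^ 2 * c with hE'
  have hkey : 4 * c * E = (trc M ^ 2 - 4) - (2 * c * s - (d - a)) ^ 2 := by
    rw [htr]; linear_combination (-4 : ℝ) * hdet
  have h4cE : 0 < 4 * c * E := by rw [hkey]; nlinarith [hlt]
  have hc : c ≠ 0 := by
    intro h0
    rw [h0] at h4cE; simp at h4cE
  rcases lt_or_gt_of_ne hc with hneg | hpos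
  · -- c < 0 : conjugate by Smat * tau s
    have hEneg : E < 0 := by nlinarith
    refine ⟨Smat * tau s, mul_mem (Smat_mem L) hs, ?_⟩
    have hrw : (Smat * tau s) * M * (Smat * tau s)⁻¹
        = Smat * (tau s * M * (tau s)⁻¹) * Smat⁻¹ := by group
    rw [hrw]
    apply red_of
    · rw [trc_conj, trc_conj]; exact ht
    · rw [conj_S_b, conj_tau_c]; linarith
    · rw [conj_S_c, conj_tau_b]
      have : M.1 0 1 + s * (M.1 1 1 - M.1 0 0) - s ^ 2 * M.1 1 0 = E := rfl
      rw [this]; linarith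
  · -- c > 0 : conjugate by tau s
    have hEpos : 0 < E := by nlinarith
    refine ⟨tau s, hs, ?_⟩
    apply red_of
    · rw [trc_conj]; exact ht
    · rw [conj_tau_b]
      have : M.1 0 1 + s * (M.1 1 1 - M.1 0 0) - s ^ 2 * M.1 1 0 = E := rfl
      rw [this]; linarith
    · rw [conj_tau_c]; exact hpos

/-- If the group contains a translation `tau μ` with `c²μ² < t² - 4`, we can reduce. -/
lemma fin_round (L : ℝ) (hL0 : 0 < L) (M : SL2) (ht : 2 < trc M) (μ : ℝ) (hμ0 : 0 < μ)
    (hμ : tau μ ∈ Gam L) (hc : M.1 1 0 ≠ 0)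
    (hsmall : (M.1 1 0) ^ 2 * μ ^ 2 < trc M ^ 2 - 4) :
    ∃ h ∈ Gam L, Red (h * M * h⁻¹) := by
  set a := M.1 0 0
  set c := M.1 1 0
  set d := M.1 1 1
  set y : ℝ := (d - a) / (2 * c * μ) with hy'
  set n : ℤ := round y with hn'
  have h2cμ : 2 * c * μ ≠ 0 := by
    intro h; apply hc; nlinarith [h]
  have hyc : (2 * c * μ) * y = d - a := by
    rw [hy']; field_simp
  have he : |y - (n : ℝ)| ≤ 1 / 2 := by
    rw [hn', abs_sub_comm]
    simpa [abs_sub_comm] using abs_sub_round y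
  have he2 : (y - (n : ℝ)) ^ 2 ≤ 1 / 4 := by
    have := abs_le.1 he
    nlinarith [this.1, this.2]
  have hτ : tau ((n : ℝ) * μ) ∈ Gam L := by
    rw [← tau_zpow]; exact zpow_mem hμ n
  apply fin_of_s L M ht ((n : ℝ) * μ) hτ
  have hform : 2 * c * ((n : ℝ) * μ) - (d - a) = -((2 * c * μ) * (y - (n : ℝ))) := by
    rw [← hyc]; ring
  rw [hform]
  have : (-((2 * c * μ) * (y - (n : ℝ)))) ^ 2 = (2 * c * μ) ^ 2 * (y - (n : ℝ)) ^ 2 := by ring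
  rw [this]
  nlinarith [sq_nonneg (2 * c * μ), sq_nonneg (y - (n : ℝ)), hsmall]

/-- Conjugating a translation by an upper-triangular element scales it by `α²`. -/
lemma conj_upper (u : SL2) (huc : u.1 1 0 = 0) (m : ℝ) :
    u * tau m * u⁻¹ = tau ((u.1 0 0) ^ 2 * m) := by
  have hdet : u.1 0 0 * u.1 1 1 - u.1 0 1 * u.1 1 0 = 1 := SL2.det_entry u
  rw [huc, mul_zero, sub_zero] at hdet
  have key : u * tau m = tau ((u.1 0 0) ^ 2 * m) * u := by
    apply Subtype.ext
    ext i j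
    fin_cases i <;> fin_cases j <;>
      (rw [SL2.mul_entry, SL2.mul_entry]; simp [SL2.mul_entry, tau, huc]; try linear_combination (-(u.1 0 0 * m)) * hdet)
  calc u * tau m * u⁻¹ = tau ((u.1 0 0) ^ 2 * m) * u * u⁻¹ := by rw [key]
    _ = tau ((u.1 0 0) ^ 2 * m) := by rw [mul_assoc, mul_inv_cancel, mul_one]

lemma conj_upper_inv (u : SL2) (huc : u.1 1 0 = 0) (hα : u.1 0 0 ≠ 0) (m : ℝ) :
    u⁻¹ * tau m * u = tau (m / (u.1 0 0) ^ 2) := by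
  have h := conj_upper u huc (m / (u.1 0 0) ^ 2)
  have hα2 : (u.1 0 0) ^ 2 ≠ 0 := pow_ne_zero _ hα
  rw [mul_div_cancel₀ _ hα2] at h
  calc u⁻¹ * tau m * u = u⁻¹ * (u * tau (m / (u.1 0 0) ^ 2) * u⁻¹) * u := by rw [h]
    _ = tau (m / (u.1 0 0) ^ 2) := by group

/-- An upper-triangular element of the group with trace > 2 yields arbitrarily
small positive translations in the group. -/
lemma small_exists (L : ℝ) (hL0 : 0 < L) (u : SL2) (hu : u ∈ Gam L)
    (huc : u.1 1 0 = 0) (htu : 2 < trc u) :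
    ∀ ε > 0, ∃ μ : ℝ, 0 < μ ∧ μ < ε ∧ tau μ ∈ Gam L := by
  set α := u.1 0 0 with hα'
  have hdet : α * u.1 1 1 = 1 := by
    have := SL2.det_entry u
    rw [huc, mul_zero, sub_zero] at this; exact this
  have hα0 : α ≠ 0 := by
    intro h; rw [h, zero_mul] at hdet; norm_num at hdet
  have hsum : 2 < α + u.1 1 1 := htu
  have hα2pos : 0 < α ^ 2 := by positivity
  have hα2ne : α ^ 2 ≠ 1 := by
    intro h
    have : (α - 1) * (α + 1) = 0 := by nlinarith
    rcases mul_eq_zero.1 this with h1 | h1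
    · have hl : α = 1 := by linarith
      rw [hl, one_mul] at hdet; rw [hl, hdet] at hsum; norm_num at hsum
    · have hl : α = -1 := by linarith
      have : u.1 1 1 = -1 := by
        rw [hl] at hdet; linarith
      rw [hl, this] at hsum; norm_num at hsum
  -- pick the contracting ratio
  have main : ∃ ρ : ℝ, 0 < ρ ∧ ρ < 1 ∧ ∀ n : ℕ, tau (L * ρ ^ n) ∈ Gam L := by
    by_cases hlt : α ^ 2 < 1
    · refine ⟨α ^ 2, hα2pos, hlt, ?_⟩
      intro n
      induction n with
      | zero => rw [pow_zero, mul_one]; exact tauL_mem L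
      | succ n ih =>
          have : L * (α ^ 2) ^ (n + 1) = α ^ 2 * (L * (α ^ 2) ^ n) := by ring
          rw [this, ← conj_upper u huc]
          exact mul_mem (mul_mem hu ih) (inv_mem hu)
    · have hgt : 1 < α ^ 2 := lt_of_le_of_ne (not_lt.1 hlt) (Ne.symm hα2ne)
      refine ⟨(α ^ 2)⁻¹, by positivity, ?_, ?_⟩
      · rw [inv_lt_one_iff₀]; right; exact hgt
      · intro n
        induction n with
        | zero => rw [pow_zero, mul_one]; exact tauL_mem L
        | succ n ih =>
            have : L * ((α ^ 2)⁻¹) ^ (n + 1) = (L * ((α ^ 2)⁻¹) ^ n) / α ^ 2 := by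
              rw [pow_succ, div_eq_mul_inv]; ring
            rw [this, ← conj_upper_inv u huc hα0]
            exact mul_mem (mul_mem (inv_mem hu) ih) hu
  obtain ⟨ρ, hρ0, hρ1, hmem⟩ := main
  intro ε hε
  obtain ⟨n, hn⟩ := exists_pow_lt_of_lt_one (show (0 : ℝ) < ε / L by positivity) hρ1
  refine ⟨L * ρ ^ n, by positivity, ?_, hmem n⟩
  rw [← lt_div_iff₀' hL0]
  exact hn

/-- Transitivity: to reduce `M` it is enough to reduce a conjugate `w M w⁻¹`. -/
lemma goal_trans (L : ℝ) (M w : SL2) (hw : w ∈ Gam L)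
    (h : ∃ h ∈ Gam L, Red (h * (w * M * w⁻¹) * h⁻¹)) :
    ∃ h ∈ Gam L, Red (h * M * h⁻¹) := by
  obtain ⟨h, hh, hr⟩ := h
  refine ⟨h * w, mul_mem hh hw, ?_⟩
  have : h * w * M * (h * w)⁻¹ = h * (w * M * w⁻¹) * h⁻¹ := by group
  rwa [this]

/-- Exceptional case: if the group contains an upper-triangular element of trace > 2,
then any member with `c ≠ 0` and trace > 2 can be reduced. -/
lemma exc (L : ℝ) (hL0 : 0 < L) (M : SL2) (ht : 2 < trc M) (hc : M.1 1 0 ≠ 0)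
    (u : SL2) (hu : u ∈ Gam L) (huc : u.1 1 0 = 0) (htu : 2 < trc u) :
    ∃ h ∈ Gam L, Red (h * M * h⁻¹) := by
  have hc2 : 0 < (M.1 1 0) ^ 2 := by positivity
  have hD : 0 < trc M ^ 2 - 4 := by nlinarith
  set ε : ℝ := min 1 ((trc M ^ 2 - 4) / (M.1 1 0) ^ 2) with hε'
  have hεpos : 0 < ε := lt_min one_pos (by positivity)
  obtain ⟨μ, hμ0, hμε, hμmem⟩ := small_exists L hL0 u hu huc htu ε hεpos
  apply fin_round L hL0 M ht μ hμ0 hμmem hc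
  have h1 : μ < 1 := lt_of_lt_of_le hμε (min_le_left _ _)
  have h2 : μ < (trc M ^ 2 - 4) / (M.1 1 0) ^ 2 := lt_of_lt_of_le hμε (min_le_right _ _)
  have h2' : μ * (M.1 1 0) ^ 2 < trc M ^ 2 - 4 := by
    rw [div_eq_mul_inv] at h2
    calc μ * (M.1 1 0) ^ 2 < ((trc M ^ 2 - 4) * ((M.1 1 0) ^ 2)⁻¹) * (M.1 1 0) ^ 2 := by
          exact mul_lt_mul_of_pos_right h2 hc2
      _ = trc M ^ 2 - 4 := by field_simp
  nlinarith

/-- Rounding: a multiple of `μ` lands within `μ/2` of the vertex. -/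
lemma round_s (c μ da : ℝ) (hc : c ≠ 0) (hμ : μ ≠ 0) :
    ∃ n : ℤ, (2 * c * ((n : ℝ) * μ) - da) ^ 2 ≤ c ^ 2 * μ ^ 2 := by
  set y : ℝ := da / (2 * c * μ) with hy'
  refine ⟨round y, ?_⟩
  have h2cμ : 2 * c * μ ≠ 0 := by
    intro h
    rcases mul_eq_zero.1 h with h' | h'
    · rcases mul_eq_zero.1 h' with h'' | h''
      · norm_num at h''
      · exact hc h''
    · exact hμ h'
  have hyc : (2 * c * μ) * y = da := by rw [hy']; field_simp
  have he : |y - (round y : ℝ)| ≤ 1 / 2 := by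
    simpa [abs_sub_comm] using abs_sub_round y
  have he2 : (y - (round y : ℝ)) ^ 2 ≤ 1 / 4 := by
    have := abs_le.1 he
    nlinarith [this.1, this.2]
  have hform : 2 * c * ((round y : ℝ) * μ) - da
      = -((2 * c * μ) * (y - (round y : ℝ))) := by
    rw [← hyc]; ring
  rw [hform]
  nlinarith [sq_nonneg (2 * c * μ), sq_nonneg (y - (round y : ℝ))]

/-- The terminal case `c² L² ≤ t² − 4` of the reduction: either a translation
finishes, or a fixed point is a multiple of `λ` and we are in the exceptional case. -/
lemma finexc (L : ℝ) (hL0 : 0 < L) (M : SL2) (hM : M ∈ Gam L) (ht : 2 < trc M)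
    (hc : M.1 1 0 ≠ 0) (hle : (M.1 1 0) ^ 2 * L ^ 2 ≤ trc M ^ 2 - 4) :
    ∃ h ∈ Gam L, Red (h * M * h⁻¹) := by
  set a := M.1 0 0
  set b := M.1 0 1
  set c := M.1 1 0
  set d := M.1 1 1
  obtain ⟨n, hq2⟩ := round_s c L (d - a) hc (ne_of_gt hL0)
  set s : ℝ := (n : ℝ) * L with hs'
  have hτ : tau s ∈ Gam L := tau_zmul_mem L n
  by_cases hstrict : (2 * c * s - (d - a)) ^ 2 < trc M ^ 2 - 4
  · exact fin_of_s L M ht s hτ hstrict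
  · -- equality: the conjugate has vanishing upper-right entry
    have heq : (2 * c * s - (d - a)) ^ 2 = trc M ^ 2 - 4 := le_antisymm (le_trans hq2 hle)
      (not_lt.1 hstrict)
    have hdet : a * d - b * c = 1 := SL2.det_entry M
    have htr : trc M = a + d := rfl
    set E := b + s * (d - a) - s ^ 2 * c with hE'
    have hkey : 4 * c * E = (trc M ^ 2 - 4) - (2 * c * s - (d - a)) ^ 2 := by
      rw [htr]; linear_combination (-4 : ℝ) * hdet
    have hE0 : E = 0 := by
      have h4 : 4 * c * E = 0 := by rw [hkey, heq]; ring
      rcases mul_eq_zero.1 h4 with h' | h'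
      · exfalso
        rcases mul_eq_zero.1 h' with h'' | h''
        · norm_num at h''
        · exact hc h''
      · exact h'
    set u : SL2 := Smat * (tau s * M * (tau s)⁻¹) * Smat⁻¹ with hu'
    have huG : u ∈ Gam L := by
      rw [hu']
      exact mul_mem (mul_mem (Smat_mem L) (mul_mem (mul_mem hτ hM) (inv_mem hτ)))
        (inv_mem (Smat_mem L))
    have huc : u.1 1 0 = 0 := by
      rw [hu', conj_S_c, conj_tau_b]
      have : M.1 0 1 + s * (M.1 1 1 - M.1 0 0) - s ^ 2 * M.1 1 0 = E := rfl
      simp only [this, hE0, neg_zero]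
    have htu : 2 < trc u := by
      rw [hu', trc_conj, trc_conj]; exact ht
    exact exc L hL0 M ht hc u huG huc htu

set_option maxHeartbeats 1000000 in
/-- Main reduction induction: contract `|c|` until the terminal case applies. -/
lemma mainP (L : ℝ) (hL0 : 0 < L) :
    ∀ N : ℕ, ∀ M : SL2, M ∈ Gam L → 2 < trc M → M.1 1 0 ≠ 0 →
      (M.1 1 0) ^ 2 * L ^ 2 * (L ^ 4 / 16) ^ N ≤ trc M ^ 2 - 4 →
      ∃ h ∈ Gam L, Red (h * M * h⁻¹) := by
  intro N
  induction N with
  | zero =>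
      intro M hM ht hc hle
      rw [pow_zero, mul_one] at hle
      exact finexc L hL0 M hM ht hc hle
  | succ N ih =>
      intro M hM ht hc hle
      by_cases hsmall : (M.1 1 0) ^ 2 * L ^ 2 ≤ trc M ^ 2 - 4
      · exact finexc L hL0 M hM ht hc hsmall
      · have hbig : trc M ^ 2 - 4 < (M.1 1 0) ^ 2 * L ^ 2 := not_le.1 hsmall
        set a := M.1 0 0
        set b := M.1 0 1
        set c := M.1 1 0
        set d := M.1 1 1
        have hD : 0 < trc M ^ 2 - 4 := by nlinarith
        have hc2 : 0 < c ^ 2 := by positivity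
        obtain ⟨n, hq2⟩ := round_s c L (d - a) hc (ne_of_gt hL0)
        set s : ℝ := (n : ℝ) * L with hs'
        have hτ : tau s ∈ Gam L := tau_zmul_mem L n
        have hdet : a * d - b * c = 1 := SL2.det_entry M
        have htr : trc M = a + d := rfl
        set E := b + s * (d - a) - s ^ 2 * c with hE'
        have hkey : 4 * c * E = (trc M ^ 2 - 4) - (2 * c * s - (d - a)) ^ 2 := by
          rw [htr]; linear_combination (-4 : ℝ) * hdet
        -- |4cE| ≤ c² L², hence E² ≤ c² L⁴ / 16
        have hub : 4 * c * E ≤ c ^ 2 * L ^ 2 := by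
          rw [hkey]; nlinarith [sq_nonneg (2 * c * s - (d - a))]
        have hlb : -(c ^ 2 * L ^ 2) ≤ 4 * c * E := by
          rw [hkey]; nlinarith
        have hE2 : E ^ 2 ≤ c ^ 2 * (L ^ 4 / 16) := by
          have h16 : (4 * c * E) ^ 2 ≤ (c ^ 2 * L ^ 2) ^ 2 := by nlinarith
          have expand : (4 * c * E) ^ 2 = (16 * c ^ 2) * E ^ 2 := by ring
          have expand2 : (c ^ 2 * L ^ 2) ^ 2 = (16 * c ^ 2) * (c ^ 2 * (L ^ 4 / 16)) := by
            ring
          rw [expand, expand2] at h16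
          exact le_of_mul_le_mul_left h16 (by positivity)
        by_cases hE0 : E = 0
        · -- exceptional : fixed point at a multiple of λ
          set u : SL2 := Smat * (tau s * M * (tau s)⁻¹) * Smat⁻¹ with hu'
          have huG : u ∈ Gam L := by
            rw [hu']
            exact mul_mem (mul_mem (Smat_mem L) (mul_mem (mul_mem hτ hM) (inv_mem hτ)))
              (inv_mem (Smat_mem L))
          have huc : u.1 1 0 = 0 := by
            rw [hu', conj_S_c, conj_tau_b]
            have : M.1 0 1 + s * (M.1 1 1 - M.1 0 0) - s ^ 2 * M.1 1 0 = E := rfl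
            simp only [this, hE0, neg_zero]
          have htu : 2 < trc u := by
            rw [hu', trc_conj, trc_conj]; exact ht
          exact exc L hL0 M ht hc u huG huc htu
        · -- contraction step
          set M2 : SL2 := Smat * (tau s * M * (tau s)⁻¹) * Smat⁻¹ with hM2'
          have hM2G : M2 ∈ Gam L := by
            rw [hM2']
            exact mul_mem (mul_mem (Smat_mem L) (mul_mem (mul_mem hτ hM) (inv_mem hτ)))
              (inv_mem (Smat_mem L))
          have htr2 : trc M2 = trc M := by rw [hM2', trc_conj, trc_conj]
          have hc2' : M2.1 1 0 = -E := by
            rw [hM2', conj_S_c, conj_tau_b]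
          have hc2ne : M2.1 1 0 ≠ 0 := by
            rw [hc2']; exact neg_ne_zero.2 hE0
          have hmeas : (M2.1 1 0) ^ 2 * L ^ 2 * (L ^ 4 / 16) ^ N ≤ trc M2 ^ 2 - 4 := by
            rw [hc2', htr2]
            have hpow : (0 : ℝ) < (L ^ 4 / 16) ^ N := by positivity
            have step1 : (-E) ^ 2 * L ^ 2 * (L ^ 4 / 16) ^ N
                ≤ (c ^ 2 * (L ^ 4 / 16)) * L ^ 2 * (L ^ 4 / 16) ^ N := by
              have : (-E) ^ 2 = E ^ 2 := by ring
              rw [this]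
              have hL2 : (0 : ℝ) < L ^ 2 := by positivity
              exact mul_le_mul_of_nonneg_right
                (mul_le_mul_of_nonneg_right hE2 hL2.le) hpow.le
            have step2 : (c ^ 2 * (L ^ 4 / 16)) * L ^ 2 * (L ^ 4 / 16) ^ N
                = c ^ 2 * L ^ 2 * (L ^ 4 / 16) ^ (N + 1) := by
              rw [pow_succ]; ring
            calc (-E) ^ 2 * L ^ 2 * (L ^ 4 / 16) ^ N
                ≤ (c ^ 2 * (L ^ 4 / 16)) * L ^ 2 * (L ^ 4 / 16) ^ N := step1
              _ = c ^ 2 * L ^ 2 * (L ^ 4 / 16) ^ (N + 1) := step2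
              _ ≤ trc M ^ 2 - 4 := hle
          obtain ⟨h, hh, hred⟩ := ih M2 hM2G (by rw [htr2]; exact ht) hc2ne hmeas
          have hwG : Smat * tau s ∈ Gam L := mul_mem (Smat_mem L) hτ
          apply goal_trans L M (Smat * tau s) hwG
          have hgw : (Smat * tau s) * M * (Smat * tau s)⁻¹ = M2 := by
            rw [hM2']; group
          rw [hgw]
          exact ⟨h, hh, hred⟩

/-- The case `c = 0`: the element itself is upper triangular, giving small
translations; move to a conjugate with `c ≠ 0` first. -/
lemma reduce_c0 (L : ℝ) (hL0 : 0 < L) (M : SL2) (hM : M ∈ Gam L) (ht : 2 < trc M)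
    (hc : M.1 1 0 = 0) : ∃ h ∈ Gam L, Red (h * M * h⁻¹) := by
  have hdet : M.1 0 0 * M.1 1 1 - M.1 0 1 * M.1 1 0 = 1 := SL2.det_entry M
  rw [hc, mul_zero, sub_zero] at hdet
  have hane : M.1 1 1 - M.1 0 0 ≠ 0 := by
    intro h0
    have had : M.1 0 0 = M.1 1 1 := by linarith
    have hsum : 2 < M.1 0 0 + M.1 1 1 := ht
    nlinarith [hdet, hsum, had]
  by_cases hb : M.1 0 1 = 0
  · -- diagonal case : conjugate by Smat * tau L
    apply goal_trans L M (Smat * tau L) (mul_mem (Smat_mem L) (tauL_mem L))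
    set M2 : SL2 := Smat * (tau L * M * (tau L)⁻¹) * Smat⁻¹ with hM2'
    have hgw : (Smat * tau L) * M * (Smat * tau L)⁻¹ = M2 := by rw [hM2']; group
    rw [hgw]
    have hM2G : M2 ∈ Gam L := by
      rw [hM2']
      exact mul_mem (mul_mem (Smat_mem L) (mul_mem (mul_mem (tauL_mem L) hM)
        (inv_mem (tauL_mem L)))) (inv_mem (Smat_mem L))
    have ht2 : 2 < trc M2 := by rw [hM2', trc_conj, trc_conj]; exact ht
    have hc2 : M2.1 1 0 ≠ 0 := by
      rw [hM2', conj_S_c, conj_tau_b, hb, hc]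
      intro h0
      apply hane
      have : L * (M.1 1 1 - M.1 0 0) = 0 := by linarith [h0]
      rcases mul_eq_zero.1 this with h' | h'
      · exact absurd h' (ne_of_gt hL0)
      · exact absurd h' (by intro hcon; exact hane hcon)
    exact exc L hL0 M2 ht2 hc2 M hM hc ht
  · -- b ≠ 0 : conjugate by Smat
    apply goal_trans L M Smat (Smat_mem L)
    set M2 : SL2 := Smat * M * Smat⁻¹ with hM2'
    have hM2G : M2 ∈ Gam L :=
      mul_mem (mul_mem (Smat_mem L) hM) (inv_mem (Smat_mem L))
    have ht2 : 2 < trc M2 := by rw [hM2', trc_conj]; exact ht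
    have hc2 : M2.1 1 0 ≠ 0 := by
      rw [hM2', conj_S_c]
      exact neg_ne_zero.2 hb
    exact exc L hL0 M2 ht2 hc2 M hM hc ht

/-- Full reduction for any element of trace > 2. -/
lemma reduce_any (L : ℝ) (hL0 : 0 < L) (hL4 : L ^ 4 / 16 < 1) (M : SL2)
    (hM : M ∈ Gam L) (ht : 2 < trc M) : ∃ h ∈ Gam L, Red (h * M * h⁻¹) := by
  by_cases hc : M.1 1 0 = 0
  · exact reduce_c0 L hL0 M hM ht hc
  · have hD : 0 < trc M ^ 2 - 4 := by nlinarith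
    have hcL : 0 < (M.1 1 0) ^ 2 * L ^ 2 := by positivity
    obtain ⟨N, hN⟩ := exists_pow_lt_of_lt_one
      (show 0 < (trc M ^ 2 - 4) / ((M.1 1 0) ^ 2 * L ^ 2) by positivity) hL4
    apply mainP L hL0 N M hM ht hc
    have := (lt_div_iff₀ hcL).1 hN
    nlinarith [this]

lemma neg_eq_SS (g : SL2) : -g = Smat * (Smat * g) := by
  apply Subtype.ext
  ext i j
  fin_cases i <;> fin_cases j <;>
    (rw [SL2.mul_entry, SL2.mul_entry, SL2.mul_entry]; simp [SL2.mul_entry, Smat, Matrix.SpecialLinearGroup.coe_neg])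

lemma conj_neg (h g : SL2) : h * (-g) * h⁻¹ = -(h * g * h⁻¹) := by
  apply Subtype.ext
  simp only [Matrix.SpecialLinearGroup.coe_mul, Matrix.SpecialLinearGroup.coe_neg,
    Matrix.neg_mul, Matrix.mul_neg]

lemma trc_neg (g : SL2) : trc (-g) = -trc g := by
  show (-g).1 0 0 + (-g).1 1 1 = -(g.1 0 0 + g.1 1 1)
  rw [Matrix.SpecialLinearGroup.coe_neg]
  simp [Matrix.neg_apply]
  ring


/-- every hyperbolic element of `Γ_q` is, up to sign, `Γ_q`-conjugate to
a reduced element: for `g ∈ Γ_q` with `|tr g| > 2` there are `h ∈ Γ_q` and a sign such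
that `g' = ±h·g·h⁻¹` satisfies `tr g' > 2`, has nonzero lower-left entry, and
`w_a(g') > 0 > w_r(g')`. -/
theorem stmt_14 (q : ℕ) (hq : 3 ≤ q) (g : SL2) (hg : g ∈ Hecke q)
    (hhyp : |trc g| > 2) :
    ∃ h ∈ Hecke q, ∃ g' : SL2,
      (g' = h * g * h⁻¹ ∨ g' = -(h * g * h⁻¹)) ∧
      trc g' > 2 ∧ g'.1 1 0 ≠ 0 ∧ wA g' > 0 ∧ 0 > wR g' := by
  set L : ℝ := 2 * Real.cos (Real.pi / q) with hL'
  have hq0 : 0 < (q : ℝ) := by positivity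
  have hq3 : (3 : ℝ) ≤ (q : ℝ) := by exact_mod_cast hq
  have hππ : Real.pi / q ≤ Real.pi / 3 :=
    div_le_div_of_nonneg_left Real.pi_pos.le (by norm_num) hq3
  have hπ0 : 0 < Real.pi / q := by positivity
  have hL1 : 1 ≤ L := by
    rw [hL']
    have := Real.cos_le_cos_of_nonneg_of_le_pi hπ0.le
      (by linarith [Real.pi_pos]) hππ
    rw [Real.cos_pi_div_three] at this
    linarith
  have hL2 : L < 2 := by
    rw [hL']
    have hle : Real.cos (Real.pi / q) ≤ 1 := Real.cos_le_one _
    have hne : Real.cos (Real.pi / q) ≠ 1 := by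
      intro h1
      have h2π : Real.pi / q < 2 * Real.pi := by
        have := Real.pi_pos
        calc Real.pi / q ≤ Real.pi / 3 := hππ
          _ < 2 * Real.pi := by linarith
      have := (Real.cos_eq_one_iff_of_lt_of_lt
        (by linarith [Real.pi_pos] : -(2 * Real.pi) < Real.pi / q) h2π).1 h1
      linarith
    have : Real.cos (Real.pi / q) < 1 := lt_of_le_of_ne hle hne
    linarith
  have hL0 : 0 < L := by linarith
  have hL4 : L ^ 4 / 16 < 1 := by
    have hsq : L ^ 2 < 4 := by nlinarith
    nlinarith [sq_nonneg L, hsq]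
  have hHG : Hecke q = Gam L := by
    have hT : Tmat q = tau L := Subtype.ext rfl
    rw [Hecke, Gam, hT]
  rw [hHG] at hg ⊢
  rcases le_or_gt 0 (trc g) with hsgn | hsgn
  · have ht : 2 < trc g := by
      rwa [abs_of_nonneg hsgn] at hhyp
    obtain ⟨h, hh, hred⟩ := reduce_any L hL0 hL4 g hg ht
    exact ⟨h, hh, h * g * h⁻¹, Or.inl rfl, hred⟩
  · have hgneg : -g ∈ Gam L := by
      rw [neg_eq_SS]
      exact mul_mem (Smat_mem L) (mul_mem (Smat_mem L) hg)
    have ht : 2 < trc (-g) := by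
      rw [trc_neg]
      rw [abs_of_neg hsgn] at hhyp
      linarith
    obtain ⟨h, hh, hred⟩ := reduce_any L hL0 hL4 (-g) hgneg ht
    exact ⟨h, hh, h * (-g) * h⁻¹, Or.inr (conj_neg h g), hred⟩
end
end

section
/- Let q ≥ 3 be an integer and Γ_q the Hecke triangle group in SL(2,ℝ). Let g ∈ Γ_q be reduced, i.e. tr g > 2, the lower-left entry of g is nonzero, and w_a(g) > 0 > w_r(g). Then there exist n ≥ 1 and k₁, …, k_n ∈ {1, …, q−1} such that g = p_{k₁} ⋯ p_{k_n} or g = −p_{k₁} ⋯ p_{k_n}. -/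
noncomputable section

/-- The matrix `p_k = (1/sin(π/q)) · [[sin(kπ/q), sin((k+1)π/q)], [sin((k−1)π/q), sin(kπ/q)]]`. -/
def pMat (q : ℕ) (k : ℤ) : Matrix (Fin 2) (Fin 2) ℝ :=
  (Real.sin (Real.pi / q))⁻¹ •
    !![Real.sin ((k : ℝ) * Real.pi / q), Real.sin (((k : ℝ) + 1) * Real.pi / q);
       Real.sin (((k : ℝ) - 1) * Real.pi / q), Real.sin ((k : ℝ) * Real.pi / q)]

namespace StmtAux

abbrev Sm : Matrix (Fin 2) (Fin 2) ℝ := !![0, 1; -1, 0]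
abbrev Tm (q : ℕ) : Matrix (Fin 2) (Fin 2) ℝ := !![1, 2 * Real.cos (Real.pi / q); 0, 1]
abbrev Tim (q : ℕ) : Matrix (Fin 2) (Fin 2) ℝ := !![1, -(2 * Real.cos (Real.pi / q)); 0, 1]

variable {q : ℕ}

lemma sθ_pos (hq : 3 ≤ q) : 0 < Real.sin (Real.pi / q) := by
  apply Real.sin_pos_of_pos_of_lt_pi
  · positivity
  · have h1 : (1:ℝ) < q := by exact_mod_cast lt_of_lt_of_le (by norm_num) hq
    calc Real.pi / q < Real.pi / 1 := by
          apply div_lt_div_of_pos_left Real.pi_pos (by norm_num) h1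
      _ = Real.pi := by norm_num

lemma rec2 (y : ℝ) : Real.sin ((y+1) * Real.pi / q) + Real.sin ((y-1) * Real.pi / q)
    = 2 * Real.cos (Real.pi / q) * Real.sin (y * Real.pi / q) := by
  rw [show (y+1)*Real.pi/q = y*Real.pi/q + Real.pi/q by ring,
      show (y-1)*Real.pi/q = y*Real.pi/q - Real.pi/q by ring, Real.sin_add, Real.sin_sub]
  ring

lemma pST (k : ℤ) : pMat q k * Sm * Tm q = -pMat q (k+1) := by
  unfold pMat
  rw [smul_mul_assoc, smul_mul_assoc, ← smul_neg]
  congr 1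
  have h1 := rec2 (q := q) ((k:ℝ))
  have h2 := rec2 (q := q) ((k:ℝ)+1)
  ext i j
  fin_cases i <;> fin_cases j <;>
    simp [Matrix.mul_apply, Fin.sum_univ_two] <;> push_cast <;> ring_nf <;> ring_nf at h1 h2 <;>
    linarith [h1, h2]

lemma p_one (hq : 3 ≤ q) : pMat q 1 = Tm q := by
  have hs := sθ_pos hq
  have key : !![Real.sin (((1:ℤ) : ℝ) * Real.pi / q), Real.sin ((((1:ℤ) : ℝ) + 1) * Real.pi / q);
       Real.sin ((((1:ℤ) : ℝ) - 1) * Real.pi / q), Real.sin (((1:ℤ) : ℝ) * Real.pi / q)]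
      = Real.sin (Real.pi / q) • Tm q := by
    ext i j
    fin_cases i <;> fin_cases j
    all_goals simp [Matrix.smul_apply]
    all_goals try rw [show ((1:ℝ)+1)*Real.pi/q = Real.pi/q + Real.pi/q from by ring, Real.sin_add]
    all_goals ring_nf
  unfold pMat
  rw [key, smul_smul, inv_mul_cancel₀ (ne_of_gt hs), one_smul]

lemma p_q (hq : 3 ≤ q) : pMat q (q : ℤ) = -Sm := by
  have hs := sθ_pos hq
  have hq0 : (q:ℝ) ≠ 0 := by positivity
  have e1 : ((q:ℤ):ℝ) * Real.pi / q = Real.pi := by push_cast; field_simp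
  have e2 : (((q:ℤ):ℝ) + 1) * Real.pi / q = Real.pi/q + Real.pi := by push_cast; field_simp; ring
  have e3 : (((q:ℤ):ℝ) - 1) * Real.pi / q = Real.pi - Real.pi/q := by push_cast; field_simp
  have key : !![Real.sin (((q:ℤ) : ℝ) * Real.pi / q), Real.sin ((((q:ℤ) : ℝ) + 1) * Real.pi / q);
       Real.sin ((((q:ℤ) : ℝ) - 1) * Real.pi / q), Real.sin (((q:ℤ) : ℝ) * Real.pi / q)]
      = Real.sin (Real.pi / q) • (-Sm) := by
    rw [e1, e2, e3, Real.sin_pi, Real.sin_add_pi, Real.sin_pi_sub]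
    ext i j
    fin_cases i <;> fin_cases j <;> simp [Matrix.smul_apply]
  unfold pMat
  rw [key, smul_smul, inv_mul_cancel₀ (ne_of_gt hs), one_smul]

lemma Smat_val : Smat.1 = Sm := rfl
lemma Tmat_val : (Tmat q).1 = Tm q := rfl

lemma Smat_inv_val : (Smat⁻¹).1 = -Sm := by
  have h : Smat⁻¹ = ⟨-Sm, by norm_num [Matrix.det_fin_two_of]⟩ := by
    apply inv_eq_of_mul_eq_one_right
    ext i j
    erw [Matrix.SpecialLinearGroup.coe_mul]
    fin_cases i <;> fin_cases j <;>
      simp [Smat, Matrix.mul_apply, Fin.sum_univ_two, Matrix.SpecialLinearGroup.coe_mul]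
  rw [h]

lemma Tmat_inv_val : ((Tmat q)⁻¹).1 = Tim q := by
  have h : (Tmat q)⁻¹ = ⟨Tim q, by norm_num [Matrix.det_fin_two_of]⟩ := by
    apply inv_eq_of_mul_eq_one_right
    ext i j
    erw [Matrix.SpecialLinearGroup.coe_mul]
    fin_cases i <;> fin_cases j <;>
      simp [Tmat, Matrix.mul_apply, Fin.sum_univ_two, Matrix.SpecialLinearGroup.coe_mul]
  rw [h]

lemma TmTim : Tm q * Tim q = 1 := by
  ext i j
  fin_cases i <;> fin_cases j <;> simp [Matrix.mul_apply, Fin.sum_univ_two]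

lemma SmSm : Sm * Sm = -1 := by
  ext i j
  fin_cases i <;> fin_cases j <;> simp [Matrix.mul_apply, Fin.sum_univ_two]

/-- right-assoc versions -/
lemma pST' (k : ℤ) : pMat q k * (Sm * Tm q) = -pMat q (k+1) := by
  rw [← mul_assoc, pST]

lemma pTi (k : ℤ) : pMat q k * Tim q = -(pMat q (k-1) * Sm) := by
  have h := congrArg (· * Tim q) (pST (q := q) (k-1))
  simp only [mul_assoc, TmTim, mul_one, neg_mul] at h
  rw [show k - 1 + 1 = k by ring] at h
  rw [h, neg_neg]

lemma pq1ST' (hq : 3 ≤ q) : pMat q ((q:ℤ)-1) * (Sm * Tm q) = Sm := by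
  rw [pST', show (q:ℤ) - 1 + 1 = (q:ℤ) by ring, p_q hq, neg_neg]

lemma SmTim (hq : 3 ≤ q) : Sm * Tim q = pMat q ((q:ℤ)-1) * Sm := by
  have h := congrArg (· * Tim q) (pq1ST' (q := q) hq)
  simp only [mul_assoc, TmTim, mul_one] at h
  rw [← h]

lemma TimEq (hq : 3 ≤ q) : Tim q = -(Sm * (pMat q ((q:ℤ)-1) * Sm)) := by
  have h := congrArg (Sm * ·) (SmTim (q := q) hq)
  simp only [← mul_assoc, SmSm] at h
  simp only [neg_mul, one_mul] at h
  rw [← neg_neg (Tim q), h, mul_assoc]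

lemma pOneTim (hq : 3 ≤ q) : pMat q 1 * Tim q = 1 := by
  rw [p_one hq, TmTim]


def P (q : ℕ) (L : List ℕ) : Matrix (Fin 2) (Fin 2) ℝ :=
  (L.map (fun k => pMat q (k : ℤ))).prod

lemma P_nil : P q [] = 1 := rfl

lemma P_concat (L : List ℕ) (k : ℕ) : P q (L ++ [k]) = P q L * pMat q (k : ℤ) := by
  simp [P, List.map_append, List.prod_append]

def mS : Bool → Matrix (Fin 2) (Fin 2) ℝ
  | true => Sm
  | false => 1

def Good (q : ℕ) (L : List ℕ) : Prop := ∀ k ∈ L, 1 ≤ k ∧ k ≤ q - 1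

def NF (q : ℕ) (g : SL2) : Prop :=
  ∃ (ε : ℝ) (e f : Bool) (L : List ℕ), (ε = 1 ∨ ε = -1) ∧ Good q L ∧
    g.1 = ε • (mS e * (P q L * mS f))

lemma neg_sgn {ε : ℝ} (hε : ε = 1 ∨ ε = -1) : -ε = 1 ∨ -ε = -1 := by
  rcases hε with h | h <;> subst h <;> norm_num

lemma Good_concat {L : List ℕ} {k : ℕ} (hL : Good q L) (h1 : 1 ≤ k) (h2 : k ≤ q - 1) :
    Good q (L ++ [k]) := by
  intro j hj
  rcases List.mem_append.mp hj with h | h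
  · exact hL j h
  · simp at h; subst h; exact ⟨h1, h2⟩

lemma Good_of_concat {L : List ℕ} {k : ℕ} (hL : Good q (L ++ [k])) : Good q L :=
  fun j hj => hL j (List.mem_append.mpr (Or.inl hj))

lemma NF_one : NF q 1 :=
  ⟨1, false, false, [], Or.inl rfl, fun k hk => absurd hk List.not_mem_nil, by simp [mS, P_nil]⟩

lemma NF_mul_S {g : SL2} (h : NF q g) : NF q (g * Smat) := by
  obtain ⟨ε, e, f, L, hε, hL, hg⟩ := h
  have hmul : (g * Smat).1 = g.1 * Sm := rfl
  cases f
  · exact ⟨ε, e, true, L, hε, hL, by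
      rw [hmul, hg]
      simp only [mS, mul_one, smul_mul_assoc, mul_assoc]⟩
  · exact ⟨-ε, e, false, L, neg_sgn hε, hL, by
      rw [hmul, hg]
      simp only [mS, smul_mul_assoc, mul_assoc, SmSm, mul_neg_one,
        mul_neg, smul_neg, neg_smul, neg_neg, mul_one]⟩

lemma NF_mul_Sinv {g : SL2} (h : NF q g) : NF q (g * Smat⁻¹) := by
  obtain ⟨ε, e, f, L, hε, hL, hg⟩ := h
  have hmul : (g * Smat⁻¹).1 = g.1 * (-Sm) := by
    rw [Matrix.SpecialLinearGroup.coe_mul, Smat_inv_val]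
  cases f
  · exact ⟨-ε, e, true, L, neg_sgn hε, hL, by
      rw [hmul, hg]
      simp only [mS, mul_one, smul_mul_assoc, mul_assoc, mul_neg,
        smul_neg, neg_smul]⟩
  · exact ⟨ε, e, false, L, hε, hL, by
      rw [hmul, hg]
      simp only [mS, smul_mul_assoc, mul_assoc, mul_neg, SmSm,
        mul_neg_one, smul_neg, neg_smul, neg_neg, mul_one]⟩

lemma NF_mul_T (hq : 3 ≤ q) {g : SL2} (h : NF q g) : NF q (g * Tmat q) := by
  obtain ⟨ε, e, f, L, hε, hL, hg⟩ := h
  have hq1 : 1 ≤ q - 1 := by omega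
  have hmul : (g * Tmat q).1 = g.1 * Tm q := rfl
  cases f
  · -- append 1
    refine ⟨ε, e, false, L ++ [1], hε, Good_concat hL le_rfl hq1, ?_⟩
    rw [hmul, hg, P_concat]
    simp only [mS, mul_one, smul_mul_assoc, mul_assoc, Nat.cast_one]
    rw [p_one hq]
  · rcases List.eq_nil_or_concat L with rfl | ⟨L', k, rfl⟩
    · cases e
      · refine ⟨ε, true, false, [1], hε, Good_concat (fun k hk => absurd hk List.not_mem_nil) le_rfl hq1, ?_⟩
        rw [hmul, hg]
        have : P q [1] = pMat q 1 := by simp [P]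
        simp only [mS, P_nil, one_mul, mul_one, smul_mul_assoc, this,
          p_one hq]
      · refine ⟨-ε, false, false, [1], neg_sgn hε, Good_concat (fun k hk => absurd hk List.not_mem_nil)
          le_rfl hq1, ?_⟩
        rw [hmul, hg]
        have : P q [1] = pMat q 1 := by simp [P]
        simp only [mS, P_nil, one_mul, mul_one, smul_mul_assoc, mul_assoc,
          SmSm, this, p_one hq, neg_one_mul, neg_mul, smul_neg, neg_smul, neg_neg]
    · simp only [List.concat_eq_append] at hL hg
      have hk := hL k (by simp)
      by_cases hkq : k = q - 1
      · refine ⟨ε, e, true, L', hε, Good_of_concat hL, ?_⟩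
        rw [hmul, hg, P_concat]
        have hcast : ((k : ℕ) : ℤ) = (q : ℤ) - 1 := by
          subst hkq; push_cast [Nat.cast_sub (by omega : 1 ≤ q)]; ring
        simp only [mS, smul_mul_assoc, mul_assoc]
        rw [hcast, pq1ST' hq]
      · have hk1 : k + 1 ≤ q - 1 := by omega
        refine ⟨-ε, e, false, L' ++ [k+1], neg_sgn hε,
          Good_concat (Good_of_concat hL) (by omega) hk1, ?_⟩
        rw [hmul, hg, P_concat, P_concat]
        have hcast : ((k + 1 : ℕ) : ℤ) = (k : ℤ) + 1 := by push_cast; ring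
        simp only [mS, smul_mul_assoc, mul_assoc]
        rw [pST', hcast]
        simp only [mul_neg, mul_one, smul_neg, neg_smul]

lemma NF_mul_Tinv (hq : 3 ≤ q) {g : SL2} (h : NF q g) : NF q (g * (Tmat q)⁻¹) := by
  obtain ⟨ε, e, f, L, hε, hL, hg⟩ := h
  have hq1 : 1 ≤ q - 1 := by omega
  have hcastq : ((q - 1 : ℕ) : ℤ) = (q : ℤ) - 1 := by
    push_cast [Nat.cast_sub (by omega : 1 ≤ q)]; ring
  have hmul : (g * (Tmat q)⁻¹).1 = g.1 * Tim q := by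
    rw [Matrix.SpecialLinearGroup.coe_mul, Tmat_inv_val]
  cases f
  · rcases List.eq_nil_or_concat L with rfl | ⟨L', k, rfl⟩
    · cases e
      · refine ⟨-ε, true, true, [q-1], neg_sgn hε,
          Good_concat (fun k hk => absurd hk List.not_mem_nil) hq1 le_rfl, ?_⟩
        rw [hmul, hg]
        have hP : P q [q-1] = pMat q ((q:ℤ) - 1) := by simp [P, hcastq]
        simp only [mS, P_nil, one_mul, mul_one, smul_mul_assoc, hP]
        rw [TimEq hq]
        simp only [smul_neg, neg_smul]
      · refine ⟨ε, false, true, [q-1], hε,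
          Good_concat (fun k hk => absurd hk List.not_mem_nil) hq1 le_rfl, ?_⟩
        rw [hmul, hg]
        have hP : P q [q-1] = pMat q ((q:ℤ) - 1) := by simp [P, hcastq]
        simp only [mS, P_nil, one_mul, mul_one, smul_mul_assoc, hP,
          SmTim hq]
    · simp only [List.concat_eq_append] at hL hg
      have hk := hL k (by simp)
      by_cases hk1 : k = 1
      · refine ⟨ε, e, false, L', hε, Good_of_concat hL, ?_⟩
        rw [hmul, hg, P_concat]
        subst hk1
        simp only [mS, mul_one, smul_mul_assoc, mul_assoc, Int.cast_one,
          Nat.cast_one, pOneTim hq]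
      · have hk2 : 2 ≤ k := by omega
        refine ⟨-ε, e, true, L' ++ [k-1], neg_sgn hε,
          Good_concat (Good_of_concat hL) (by omega) (by omega), ?_⟩
        rw [hmul, hg, P_concat, P_concat]
        have hcast : ((k - 1 : ℕ) : ℤ) = (k : ℤ) - 1 := by
          push_cast [Nat.cast_sub (by omega : 1 ≤ k)]; ring
        simp only [mS, mul_one, smul_mul_assoc, mul_assoc]
        rw [pTi, hcast]
        simp only [mul_neg, smul_neg, neg_smul]
  · refine ⟨ε, e, true, L ++ [q-1], hε, Good_concat hL hq1 le_rfl, ?_⟩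
    rw [hmul, hg, P_concat]
    simp only [mS, smul_mul_assoc, mul_assoc]
    rw [hcastq, SmTim hq]

lemma NF_of_mem (hq : 3 ≤ q) {g : SL2} (hg : g ∈ Hecke q) : NF q g := by
  unfold Hecke at hg
  induction hg using Subgroup.closure_induction_right with
  | one => exact NF_one
  | mul_right x hx y hy ih =>
    rcases hy with rfl | rfl
    · exact NF_mul_S ih
    · exact NF_mul_T hq ih
  | mul_inv_cancel x hx y hy ih =>
    rcases hy with rfl | rfl
    · exact NF_mul_Sinv ih
    · exact NF_mul_Tinv hq ih


lemma pMat_entry_nonneg (hq : 3 ≤ q) {k : ℕ} (h1 : 1 ≤ k) (h2 : k ≤ q - 1) (i j : Fin 2) :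
    0 ≤ pMat q (k : ℤ) i j := by
  have hs := sθ_pos hq
  have hqpos : (0:ℝ) < q := by positivity
  have hb : ∀ x : ℝ, 0 ≤ x → x ≤ q → 0 ≤ Real.sin (x * Real.pi / q) := by
    intro x hx hxq
    apply Real.sin_nonneg_of_nonneg_of_le_pi
    · positivity
    · rw [div_le_iff₀ hqpos]
      nlinarith [Real.pi_pos]
  have hk0 : (0:ℝ) ≤ (k:ℝ) := by positivity
  have hkq : (k:ℝ) ≤ q := by exact_mod_cast (by omega : k ≤ q)
  have h3 : (k:ℝ) + 1 ≤ q := by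
    have : k + 1 ≤ q := by omega
    exact_mod_cast this
  have h4 : (0:ℝ) ≤ (k:ℝ) - 1 := by
    have : (1:ℝ) ≤ k := by exact_mod_cast h1
    linarith
  unfold pMat
  fin_cases i <;> fin_cases j <;> simp only [Matrix.smul_apply] <;>
    refine mul_nonneg (inv_nonneg.mpr hs.le) ?_ <;>
    simp only [Matrix.cons_val', Matrix.cons_val_zero, Matrix.cons_val_one, Matrix.head_cons,
      Matrix.head_fin_const, Matrix.empty_val', Matrix.cons_val_fin_one, Matrix.of_apply] <;>
    push_cast <;>
    first
      | exact hb _ hk0 hkq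
      | exact hb _ (by linarith) h3
      | exact hb _ h4 (by linarith)

lemma P_nonneg (hq : 3 ≤ q) : ∀ L : List ℕ, Good q L → ∀ i j : Fin 2, 0 ≤ P q L i j := by
  intro L
  induction L with
  | nil =>
    intro _ i j
    by_cases h : i = j <;> simp [P_nil, Matrix.one_apply, h]
  | cons k L ih =>
    intro hL i j
    have hP : P q (k :: L) = pMat q (k:ℤ) * P q L := by simp [P]
    have hk := hL k (by simp)
    have hL' : Good q L := fun j hj => hL j (by simp [hj])
    rw [hP, Matrix.mul_apply, Fin.sum_univ_two]
    have n1 := pMat_entry_nonneg hq hk.1 hk.2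
    exact add_nonneg (mul_nonneg (n1 i 0) (ih hL' 0 j)) (mul_nonneg (n1 i 1) (ih hL' 1 j))

lemma Sm_mul (X : Matrix (Fin 2) (Fin 2) ℝ) :
    Sm * X = !![X 1 0, X 1 1; -(X 0 0), -(X 0 1)] := by
  ext i j
  fin_cases i <;> fin_cases j <;> simp [Matrix.mul_apply, Fin.sum_univ_two]

lemma mul_Sm (X : Matrix (Fin 2) (Fin 2) ℝ) :
    X * Sm = !![-(X 0 1), X 0 0; -(X 1 1), X 1 0] := by
  ext i j
  fin_cases i <;> fin_cases j <;> simp [Matrix.mul_apply, Fin.sum_univ_two]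

end StmtAux

open StmtAux

/-- every reduced `g ∈ Γ_q` (i.e. `tr g > 2`, nonzero lower-left entry,
`w_a(g) > 0 > w_r(g)`) is, up to sign, a nonempty product `p_{k₁} ⋯ p_{k_n}` with
`k₁, …, k_n ∈ {1, …, q−1}`. -/
theorem stmt_15 (q : ℕ) (hq : 3 ≤ q) (g : SL2) (hg : g ∈ Hecke q)
    (htr : trc g > 2) (hc : g.1 1 0 ≠ 0) (hred : wA g > 0 ∧ 0 > wR g) :
    ∃ L : List ℕ, L ≠ [] ∧ (∀ k ∈ L, 1 ≤ k ∧ k ≤ q - 1) ∧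
      (g.1 = (L.map (fun k => pMat q (k : ℤ))).prod ∨
       g.1 = -((L.map (fun k => pMat q (k : ℤ))).prod)) := by
  obtain ⟨ε, e, f, L, hε, hL, hNF⟩ := NF_of_mem hq hg
  have hPnn := P_nonneg hq L hL
  -- determinant
  have hdet : g.1 0 0 * g.1 1 1 - g.1 0 1 * g.1 1 0 = 1 := by
    have h := g.2
    rwa [Matrix.det_fin_two] at h
  have hsq : Real.sqrt ((trc g)^2 - 4) ^ 2 = (trc g)^2 - 4 :=
    Real.sq_sqrt (by nlinarith)
  have hsqnn : (0:ℝ) ≤ Real.sqrt ((trc g)^2 - 4) := Real.sqrt_nonneg _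
  have hlam : lamM g ≤ lamP g := by unfold lamM lamP; linarith
  have hnum : (lamP g - g.1 1 1) * (lamM g - g.1 1 1) = -(g.1 0 1 * g.1 1 0) := by
    simp only [lamP, lamM, trc] at hsq ⊢
    linear_combination (-1/4 : ℝ) * hsq - hdet
  have hbc : 0 < g.1 0 1 * g.1 1 0 := by
    have h1 : wA g * wR g < 0 := mul_neg_of_pos_of_neg hred.1 hred.2
    have hc2 : 0 < g.1 1 0 * g.1 1 0 := mul_self_pos.mpr hc
    have h3 : wA g * wR g = -(g.1 0 1 * g.1 1 0) / (g.1 1 0 * g.1 1 0) := by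
      unfold wA wR
      rw [div_mul_div_comm, hnum]
    rw [h3] at h1
    rcases div_neg_iff.mp h1 with ⟨h4, h5⟩ | ⟨h4, h5⟩
    · linarith
    · linarith
  cases e <;> cases f <;> simp only [mS, one_mul, mul_one] at hNF
  · -- e = false, f = false : good case
    have hLne : L ≠ [] := by
      rintro rfl
      apply hc
      rw [hNF]
      simp [P_nil, Matrix.smul_apply, Matrix.one_apply]
    refine ⟨L, hLne, hL, ?_⟩
    rcases hε with rfl | rfl
    · left; rw [hNF, one_smul]; rfl
    · right; rw [hNF, neg_smul, one_smul]; rfl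
  · -- e = false, f = true : g = ±(P * S)
    exfalso
    have hb' : g.1 0 1 = ε * P q L 0 0 := by
      rw [hNF, mul_Sm]
      simp [Matrix.smul_apply]
    have hc' : g.1 1 0 = ε * -(P q L 1 1) := by
      rw [hNF, mul_Sm]
      simp [Matrix.smul_apply]
    have hε2 : ε * ε = 1 := by rcases hε with rfl | rfl <;> norm_num
    have hkey : g.1 0 1 * g.1 1 0 = -(P q L 0 0 * P q L 1 1) := by
      rw [hb', hc']
      linear_combination (-(P q L 0 0 * P q L 1 1)) * hε2
    nlinarith [mul_nonneg (hPnn 0 0) (hPnn 1 1)]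
  · -- e = true, f = false : g = ±(S * P)
    exfalso
    have hb' : g.1 0 1 = ε * P q L 1 1 := by
      rw [hNF, Sm_mul]
      simp [Matrix.smul_apply]
    have hc' : g.1 1 0 = ε * -(P q L 0 0) := by
      rw [hNF, Sm_mul]
      simp [Matrix.smul_apply]
    have hε2 : ε * ε = 1 := by rcases hε with rfl | rfl <;> norm_num
    have hkey : g.1 0 1 * g.1 1 0 = -(P q L 1 1 * P q L 0 0) := by
      rw [hb', hc']
      linear_combination (-(P q L 1 1 * P q L 0 0)) * hε2
    nlinarith [mul_nonneg (hPnn 1 1) (hPnn 0 0)]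
  · -- e = true, f = true : g = ±(S * (P * S))
    exfalso
    rw [mul_Sm, Sm_mul] at hNF
    have ha' : g.1 0 0 = ε * -(P q L 1 1) := by
      rw [hNF]; simp [Matrix.smul_apply]
    have hd' : g.1 1 1 = ε * -(P q L 0 0) := by
      rw [hNF]; simp [Matrix.smul_apply]
    have hc' : g.1 1 0 = ε * P q L 0 1 := by
      rw [hNF]; simp [Matrix.smul_apply]
    rcases hε with rfl | rfl
    · -- trace ≤ 0
      unfold trc at htr
      rw [ha', hd'] at htr
      have := hPnn 0 0
      have := hPnn 1 1
      linarith
    · -- c < 0, fixed point contradiction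
      have hB : 0 < P q L 0 1 := by
        rcases lt_or_eq_of_le (hPnn 0 1) with h | h
        · exact h
        · exfalso; apply hc; rw [hc', ← h]; ring
      have hcneg : g.1 1 0 < 0 := by rw [hc']; nlinarith
      have h5 : lamP g - g.1 1 1 < 0 := by
        have h := hred.1
        unfold wA at h
        rcases div_pos_iff.mp h with ⟨h6, h7⟩ | ⟨h6, h7⟩
        · linarith
        · linarith
      have h6 : 0 < lamM g - g.1 1 1 := by
        have h := hred.2
        unfold wR at h
        rcases div_neg_iff.mp h with ⟨h6, h7⟩ | ⟨h6, h7⟩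
        · linarith
        · linarith
      linarith
end
end

section
/- The matrix g = [[1,1],[1,2]] belongs to Γ₃, the subgroup of SL(2,ℝ) generated by S = [[0,1],[−1,0]] and T₃ = [[1,1],[0,1]] (indeed Γ₃ = SL(2,ℤ)). However, for every integer q ≥ 4, neither g nor −g belongs to the Hecke triangle group Γ_q, the subgroup of SL(2,ℝ) generated by S and T_q = [[1, 2cos(π/q)],[0,1]]. Consequently, the indefinite binary quadratic form [1,1,−1] is associated to the modular group but not to any Hecke triangle group Γ_q with q > 3. -/
noncomputable section

/-- The matrix `[[1,1],[1,2]] ∈ SL(2,ℝ)`, associated to the form `[1,1,−1]`. -/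
def gEx : SL2 := ⟨!![1, 1; 1, 2], by norm_num [Matrix.det_fin_two_of]⟩

namespace Stmt19Aux
open Polynomial

lemma m22_ext {α : Type*} {a b c d a' b' c' d' : α} (h1 : a = a') (h2 : b = b')
    (h3 : c = c') (h4 : d = d') : !![a,b;c,d] = !![a',b';c',d'] := by
  subst h1 h2 h3 h4; rfl

lemma m22_entries {α : Type*} {a b c d a' b' c' d' : α}
    (h : (!![a,b;c,d] : Matrix (Fin 2) (Fin 2) α) = !![a',b';c',d']) :
    a = a' ∧ b = b' ∧ c = c' ∧ d = d' := by
  refine ⟨?_, ?_, ?_, ?_⟩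
  · simpa using congrFun (congrFun h 0) 0
  · simpa using congrFun (congrFun h 0) 1
  · simpa using congrFun (congrFun h 1) 0
  · simpa using congrFun (congrFun h 1) 1

/-- The minimal polynomial of `λ`, reduced mod 2. -/
def mbar (lam : ℝ) : (ZMod 2)[X] := (minpoly ℤ lam).map (Int.castRingHom (ZMod 2))

/-- The ring `𝔽₂[x]/(m̄)`, i.e. `ℤ[λ]/(2)`. -/
abbrev Rq (lam : ℝ) := (ZMod 2)[X] ⧸ Ideal.span {mbar lam}

/-- Reduction `ℤ[X] → 𝔽₂[x]/(m̄)`. -/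
def pihom (lam : ℝ) : ℤ[X] →+* Rq lam :=
  (Ideal.Quotient.mk (Ideal.span {mbar lam})).comp (Polynomial.mapRingHom (Int.castRingHom (ZMod 2)))

lemma char2 (lam : ℝ) : (2 : Rq lam) = 0 := by
  have h : (2 : (ZMod 2)[X]) = 0 := by
    rw [← map_ofNat (C : ZMod 2 →+* (ZMod 2)[X]) 2, show (2 : ZMod 2) = 0 from rfl, map_zero]
  calc (2 : Rq lam) = (Ideal.Quotient.mk _) (2 : (ZMod 2)[X]) := by rw [map_ofNat]
    _ = 0 := by rw [h, map_zero]

lemma neg_eq {lam : ℝ} (a : Rq lam) : -a = a := by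
  have h := char2 lam; linear_combination -a * h

/-- Fibonacci-like continuant polynomials in `ℤ[λ]/(2)`, with `F 0 = 1, F 1 = 0`. -/
def FR (lam : ℝ) : ℕ → Rq lam
  | 0 => 1
  | 1 => 0
  | (n+2) => pihom lam X * FR lam (n+1) + FR lam n

lemma FR_zero (lam : ℝ) : FR lam 0 = 1 := rfl
lemma FR_one (lam : ℝ) : FR lam 1 = 0 := rfl
lemma FR_rec (lam : ℝ) (n : ℕ) : FR lam (n+2) = pihom lam X * FR lam (n+1) + FR lam n := rfl

/-- The four possible shapes (mod 2) of an element of the Hecke group: the reductions of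
the alternating words `(st)^k, (ts)^k, s(ts)^k, t(st)^k`. -/
def Qp (lam : ℝ) (M : Matrix (Fin 2) (Fin 2) (Rq lam)) : Prop :=
  ∃ n : ℕ,
    M = !![FR lam n, FR lam (n+1); FR lam (n+1), FR lam (n+2)] ∨
    M = !![FR lam (n+2), FR lam (n+1); FR lam (n+1), FR lam n] ∨
    M = !![FR lam (n+1), FR lam n; FR lam (n+2), FR lam (n+1)] ∨
    M = !![FR lam (n+2), FR lam (n+3); FR lam (n+1), FR lam (n+2)]

def sR (lam : ℝ) : Matrix (Fin 2) (Fin 2) (Rq lam) := !![0,1;1,0]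
def tR (lam : ℝ) : Matrix (Fin 2) (Fin 2) (Rq lam) := !![1, pihom lam X; 0, 1]

lemma Qp_s {lam : ℝ} {M : Matrix (Fin 2) (Fin 2) (Rq lam)} (h : Qp lam M) :
    Qp lam (sR lam * M) := by
  obtain ⟨n, h | h | h | h⟩ := h <;> subst h <;> rw [sR, Matrix.mul_fin_two]
  · match n with
    | 0 =>
      refine ⟨0, Or.inr (Or.inr (Or.inl (m22_ext (by ring) ?_ ?_ (by ring))))⟩
      · show 0 * FR lam 1 + 1 * FR lam 2 = FR lam 0
        rw [FR_rec, FR_one, FR_zero]; ring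
      · show 1 * FR lam 0 + 0 * FR lam 1 = FR lam 2
        rw [FR_rec, FR_one, FR_zero]; ring
    | (m+1) => exact ⟨m, Or.inr (Or.inr (Or.inr
        (m22_ext (by ring) (by ring) (by ring) (by ring))))⟩
  · exact ⟨n, Or.inr (Or.inr (Or.inl (m22_ext (by ring) (by ring) (by ring) (by ring))))⟩
  · exact ⟨n, Or.inr (Or.inl (m22_ext (by ring) (by ring) (by ring) (by ring)))⟩
  · exact ⟨n+1, Or.inl (m22_ext (by ring) (by ring) (by ring) (by ring))⟩

lemma Qp_t {lam : ℝ} {M : Matrix (Fin 2) (Fin 2) (Rq lam)} (h : Qp lam M) :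
    Qp lam (tR lam * M) := by
  have h2 := char2 lam
  obtain ⟨n, h | h | h | h⟩ := h <;> subst h <;> rw [tR, Matrix.mul_fin_two]
  · exact ⟨n, Or.inr (Or.inr (Or.inr (m22_ext
      (by linear_combination -(FR_rec lam n)) (by linear_combination -(FR_rec lam (n+1)))
      (by ring) (by ring))))⟩
  · match n with
    | 0 =>
      refine ⟨0, Or.inr (Or.inr (Or.inr (m22_ext ?_ ?_ ?_ ?_)))⟩
      · show 1 * FR lam 2 + pihom lam X * FR lam 1 = FR lam 2
        rw [FR_one]; ring
      · show 1 * FR lam 1 + pihom lam X * FR lam 0 = FR lam 3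
        rw [FR_rec, FR_rec, FR_one, FR_zero]; ring
      · show 0 * FR lam 2 + 1 * FR lam 1 = FR lam 1; ring
      · show 0 * FR lam 1 + 1 * FR lam 0 = FR lam 2
        rw [FR_rec, FR_one, FR_zero]; ring
    | (m+1) =>
      refine ⟨m, Or.inr (Or.inr (Or.inl (m22_ext ?_ ?_ (by ring) (by ring))))⟩
      · linear_combination (FR_rec lam (m+1)) + (pihom lam X * FR lam (m+2)) * h2
      · linear_combination (FR_rec lam m) + (pihom lam X * FR lam (m+1)) * h2
  · exact ⟨n+1, Or.inr (Or.inl (m22_ext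
      (by linear_combination -(FR_rec lam (n+1))) (by linear_combination -(FR_rec lam n))
      (by ring) (by ring)))⟩
  · exact ⟨n, Or.inl (m22_ext
      (by linear_combination (FR_rec lam n) + (pihom lam X * FR lam (n+1)) * h2)
      (by linear_combination (FR_rec lam (n+1)) + (pihom lam X * FR lam (n+2)) * h2)
      (by ring) (by ring))⟩

/-- Generic `T` matrix. -/
def Tgen (lam : ℝ) : SL2 := ⟨!![1, lam; 0, 1], by norm_num [Matrix.det_fin_two_of]⟩

/-- Evaluation `ℤ[X] → ℝ` at `λ`. -/
def evalR (lam : ℝ) : ℤ[X] →+* ℝ := (Polynomial.aeval lam).toRingHom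

lemma map22 {α β : Type*} (f : α → β) (a b c d : α) :
    (!![a,b;c,d] : Matrix (Fin 2) (Fin 2) α).map f = !![f a, f b; f c, f d] := by
  ext i j; fin_cases i <;> fin_cases j <;> simp [Matrix.map_apply]

/-- Every element of the Hecke group lifts to an integer-polynomial matrix that
evaluates to it at `λ`, and whose mod-2 reduction is one of the four shapes. -/
lemma shapes_of_mem (lam : ℝ) {γ : SL2} (h : γ ∈ Subgroup.closure {Smat, Tgen lam}) :
    ∃ A : Matrix (Fin 2) (Fin 2) ℤ[X],
      A.map (evalR lam) = (γ : Matrix (Fin 2) (Fin 2) ℝ) ∧ Qp lam (A.map (pihom lam)) := by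
  induction h using Subgroup.closure_induction_left with
  | one =>
    refine ⟨!![1,0;0,1], ?_, 0, Or.inl ?_⟩
    · rw [map22]
      simp only [map_one, map_zero]
      rw [Matrix.SpecialLinearGroup.coe_one, Matrix.one_fin_two]
    · rw [map22]
      simp only [map_one, map_zero]
      refine m22_ext (FR_zero lam).symm (FR_one lam).symm (FR_one lam).symm ?_
      rw [FR_rec, FR_one, FR_zero]; ring
  | mul_left x hx y hy ih =>
    obtain ⟨A, hA, hQ⟩ := ih
    simp only [Set.mem_insert_iff, Set.mem_singleton_iff] at hx
    rcases hx with hx | hx <;> subst hx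
    · refine ⟨!![0,1;-1,0] * A, ?_, ?_⟩
      · rw [Matrix.map_mul, hA, map22, Matrix.SpecialLinearGroup.coe_mul]
        simp only [map_one, map_zero, map_neg]
        rfl
      · rw [Matrix.map_mul, map22]
        simp only [map_one, map_zero, map_neg]
        rw [show (!![0,1;-1,0] : Matrix (Fin 2) (Fin 2) (Rq lam)) = sR lam by
          rw [sR]; exact m22_ext rfl rfl (neg_eq 1) rfl]
        exact Qp_s hQ
    · refine ⟨!![1,X;0,1] * A, ?_, ?_⟩
      · rw [Matrix.map_mul, hA, map22, Matrix.SpecialLinearGroup.coe_mul]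
        simp only [map_one, map_zero]
        rw [show evalR lam X = lam from aeval_X lam]
        rfl
      · rw [Matrix.map_mul, map22]
        simp only [map_one, map_zero]
        exact Qp_t hQ
  | inv_mul_cancel x hx y hy ih =>
    obtain ⟨A, hA, hQ⟩ := ih
    simp only [Set.mem_insert_iff, Set.mem_singleton_iff] at hx
    rcases hx with hx | hx <;> subst hx
    · refine ⟨!![0,-1;1,0] * A, ?_, ?_⟩
      · rw [Matrix.map_mul, hA, map22, Matrix.SpecialLinearGroup.coe_mul,
          Matrix.SpecialLinearGroup.coe_inv]
        simp only [map_one, map_zero, map_neg]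
        rw [show ((Smat : SL2) : Matrix (Fin 2) (Fin 2) ℝ) = !![0,1;-1,0] from rfl,
          Matrix.adjugate_fin_two]
        norm_num
      · rw [Matrix.map_mul, map22]
        simp only [map_one, map_zero, map_neg]
        rw [show (!![0,-1;1,0] : Matrix (Fin 2) (Fin 2) (Rq lam)) = sR lam by
          rw [sR]; exact m22_ext rfl (neg_eq 1) rfl rfl]
        exact Qp_s hQ
    · refine ⟨!![1,-X;0,1] * A, ?_, ?_⟩
      · rw [Matrix.map_mul, hA, map22, Matrix.SpecialLinearGroup.coe_mul,
          Matrix.SpecialLinearGroup.coe_inv]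
        simp only [map_one, map_zero, map_neg]
        rw [show evalR lam X = lam from aeval_X lam,
          show ((Tgen lam : SL2) : Matrix (Fin 2) (Fin 2) ℝ) = !![1,lam;0,1] from rfl,
          Matrix.adjugate_fin_two]
        norm_num
      · rw [Matrix.map_mul, map22]
        simp only [map_one, map_zero, map_neg]
        rw [show (!![1, -(pihom lam X);0,1] : Matrix (Fin 2) (Fin 2) (Rq lam)) = tR lam by
          rw [tR]; exact m22_ext rfl (neg_eq _) rfl rfl]
        exact Qp_t hQ

lemma isIntegral_two_cos (q : ℕ) (hq : 1 ≤ q) :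
    IsIntegral ℤ (2 * Real.cos (Real.pi / q)) := by
  have hq0 : (q : ℂ) ≠ 0 := by exact_mod_cast (by omega : q ≠ 0)
  set θ : ℝ := Real.pi / q with hθ
  have key : ∀ z : ℂ, z ^ (2 * q) = 1 → IsIntegral ℤ z := by
    intro z hz
    refine ⟨X ^ (2 * q) - C 1, Polynomial.monic_X_pow_sub_C 1 (by omega), ?_⟩
    simp [hz]
  have e1 : (Complex.exp (θ * Complex.I)) ^ (2 * q) = 1 := by
    rw [← Complex.exp_nat_mul]
    have : (↑(2 * q) : ℂ) * (↑θ * Complex.I) = 2 * Real.pi * Complex.I := by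
      rw [hθ]; push_cast; field_simp
    rw [this, Complex.exp_two_pi_mul_I]
  have e2 : (Complex.exp (-(θ * Complex.I))) ^ (2 * q) = 1 := by
    rw [← Complex.exp_nat_mul]
    have : (↑(2 * q) : ℂ) * (-(↑θ * Complex.I)) = -(2 * Real.pi * Complex.I) := by
      rw [hθ]; push_cast; field_simp
    rw [this, Complex.exp_neg, Complex.exp_two_pi_mul_I, inv_one]
  have hsum : IsIntegral ℤ (Complex.exp (θ * Complex.I) + Complex.exp (-(θ * Complex.I))) :=
    (key _ e1).add (key _ e2)
  have hcast : ((2 * Real.cos θ : ℝ) : ℂ)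
      = Complex.exp (θ * Complex.I) + Complex.exp (-(θ * Complex.I)) := by
    rw [Complex.ofReal_mul, Complex.ofReal_cos, Complex.cos]
    push_cast
    ring
  rw [← isIntegral_algebraMap_iff (Complex.ofReal_injective)]
  show IsIntegral ℤ ((2 * Real.cos θ : ℝ) : ℂ)
  rw [hcast]; exact hsum

lemma bounds (q : ℕ) (hq : 4 ≤ q) :
    1 < 2 * Real.cos (Real.pi / q) ∧ 2 * Real.cos (Real.pi / q) < 2 := by
  have pi_pos := Real.pi_pos
  have hq0 : (0:ℝ) < q := by positivity
  have h3q : (3:ℝ) < q := by exact_mod_cast (by omega : 3 < q)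
  constructor
  · have h := Real.cos_lt_cos_of_nonneg_of_le_pi (by positivity)
      (by linarith : Real.pi / 3 ≤ Real.pi)
      (div_lt_div_of_pos_left pi_pos (by norm_num) h3q)
    rw [Real.cos_pi_div_three] at h
    linarith
  · have h := Real.cos_lt_cos_of_nonneg_of_le_pi (le_refl 0)
      (by
        have : Real.pi / q ≤ Real.pi / 1 :=
          div_le_div_of_nonneg_left pi_pos.le one_pos (by linarith)
        simpa using this)
      (by positivity : (0:ℝ) < Real.pi / q)
    rw [Real.cos_zero] at h
    linarith

lemma two_le_deg {lam : ℝ} (hint : IsIntegral ℤ lam) (h1 : 1 < lam) (h2 : lam < 2) :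
    2 ≤ (minpoly ℤ lam).natDegree := by
  by_contra hlt
  push_neg at hlt
  have hpos : 0 < (minpoly ℤ lam).natDegree := minpoly.natDegree_pos hint
  have hdeg : (minpoly ℤ lam).natDegree = 1 := by omega
  have hmonic := minpoly.monic hint
  have heq : minpoly ℤ lam = X + C ((minpoly ℤ lam).coeff 0) := hmonic.eq_X_add_C hdeg
  have h0 := minpoly.aeval ℤ lam
  rw [heq] at h0
  simp only [map_add, aeval_X, aeval_C] at h0
  have hlam : lam = -(((minpoly ℤ lam).coeff 0 : ℤ) : ℝ) := by
    have : lam + (((minpoly ℤ lam).coeff 0 : ℤ) : ℝ) = 0 := by exact_mod_cast h0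
    linarith
  set c := (minpoly ℤ lam).coeff 0
  have hc1 : (1:ℝ) < -(c:ℝ) := by rw [← hlam] at *; linarith
  have hc2 : -(c:ℝ) < 2 := by rw [← hlam] at *; linarith
  have i1 : (1:ℤ) < -c := by exact_mod_cast hc1
  have i2 : -c < 2 := by exact_mod_cast hc2
  omega

lemma small_div {lam : ℝ} (hint : IsIntegral ℤ lam) (h1 : 1 < lam) (h2 : lam < 2)
    {p : (ZMod 2)[X]} (hp : p ≠ 0) (hdeg : p.natDegree ≤ 1) (hdvd : mbar lam ∣ p) : False := by
  have hle := Polynomial.natDegree_le_of_dvd hdvd hp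
  have hm : (mbar lam).natDegree = (minpoly ℤ lam).natDegree :=
    (minpoly.monic hint).natDegree_map _
  have := two_le_deg hint h1 h2
  omega

lemma pihom_zero_dvd {lam : ℝ} {p : ℤ[X]} (h : pihom lam p = 0) :
    mbar lam ∣ p.map (Int.castRingHom (ZMod 2)) := by
  have h0 : p.map (Int.castRingHom (ZMod 2)) ∈ Ideal.span {mbar lam} :=
    Ideal.Quotient.eq_zero_iff_mem.mp h
  rwa [Ideal.mem_span_singleton] at h0

lemma pihom_eq_intCast {lam : ℝ} (hint : IsIntegral ℤ lam) {p : ℤ[X]} {c : ℤ}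
    (h : evalR lam p = (c : ℝ)) : pihom lam p = (c : Rq lam) := by
  have h0 : (Polynomial.aeval lam) (p - C c) = 0 := by
    have : evalR lam (p - C c) = 0 := by
      rw [map_sub, h]
      have : evalR lam (C c) = (c : ℝ) := by
        show (Polynomial.aeval lam) (C c) = (c : ℝ)
        simp
      rw [this, sub_self]
    exact this
  obtain ⟨u, hu⟩ := minpoly.isIntegrallyClosed_dvd hint h0
  have hp : p = C c + minpoly ℤ lam * u := by linear_combination hu
  have hm : pihom lam (minpoly ℤ lam) = 0 :=
    Ideal.Quotient.eq_zero_iff_mem.mpr (Ideal.subset_span (Set.mem_singleton _))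
  rw [hp, map_add, map_mul, hm, zero_mul, add_zero,
    show (C c : ℤ[X]) = (c : ℤ[X]) from Polynomial.C_eq_intCast c, map_intCast]

lemma intCast_parity {lam : ℝ} (c : ℤ) :
    (c : Rq lam) = ((c % 2 : ℤ) : Rq lam) := by
  have h := char2 lam
  have hc : (c : ℤ) = 2 * (c / 2) + c % 2 := (Int.mul_ediv_add_emod c 2).symm
  calc (c : Rq lam) = ((2 * (c / 2) + c % 2 : ℤ) : Rq lam) := by rw [← hc]
    _ = 2 * ((c / 2 : ℤ) : Rq lam) + ((c % 2 : ℤ) : Rq lam) := by push_cast; ring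
    _ = ((c % 2 : ℤ) : Rq lam) := by rw [h]; ring

/-- The key non-membership criterion: a matrix in `SL(2,ℝ)` whose entries are integers
with parities (odd, odd, odd, even) is not in the group generated by `S` and `T_λ`,
for `λ` an algebraic integer with `1 < λ < 2`. -/
lemma not_mem_closure {lam : ℝ} (hint : IsIntegral ℤ lam) (h1 : 1 < lam) (h2 : lam < 2)
    {γ : SL2} (a b c d : ℤ) (ha : a % 2 = 1) (hb : b % 2 = 1) (hc : c % 2 = 1) (hd : d % 2 = 0)
    (hcoe : (γ : Matrix (Fin 2) (Fin 2) ℝ) = !![(a:ℝ), (b:ℝ); (c:ℝ), (d:ℝ)]) :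
    γ ∉ Subgroup.closure {Smat, Tgen lam} := by
  intro hγ
  obtain ⟨A, hA, hQ⟩ := shapes_of_mem lam hγ
  rw [hcoe] at hA
  have e00 : evalR lam (A 0 0) = (a : ℝ) := by
    have := congrFun (congrFun hA 0) 0; simpa [Matrix.map_apply] using this
  have e01 : evalR lam (A 0 1) = (b : ℝ) := by
    have := congrFun (congrFun hA 0) 1; simpa [Matrix.map_apply] using this
  have e10 : evalR lam (A 1 0) = (c : ℝ) := by
    have := congrFun (congrFun hA 1) 0; simpa [Matrix.map_apply] using this
  have e11 : evalR lam (A 1 1) = (d : ℝ) := by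
    have := congrFun (congrFun hA 1) 1; simpa [Matrix.map_apply] using this
  have p00 : pihom lam (A 0 0) = 1 := by
    rw [pihom_eq_intCast hint e00, intCast_parity, ha]; norm_num
  have p01 : pihom lam (A 0 1) = 1 := by
    rw [pihom_eq_intCast hint e01, intCast_parity, hb]; norm_num
  have p10 : pihom lam (A 1 0) = 1 := by
    rw [pihom_eq_intCast hint e10, intCast_parity, hc]; norm_num
  have p11 : pihom lam (A 1 1) = 0 := by
    rw [pihom_eq_intCast hint e11, intCast_parity, hd]; norm_num
  have hM : A.map (pihom lam) = !![(1 : Rq lam), 1; 1, 0] := by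
    ext i j
    fin_cases i <;> fin_cases j <;>
      simp [Matrix.map_apply, p00, p01, p10, p11]
  rw [hM] at hQ
  obtain ⟨n, hsh | hsh | hsh | hsh⟩ := hQ
  · obtain ⟨E1, E2, _, E4⟩ := m22_entries hsh
    have hx : pihom lam (X + 1) = 0 := by
      rw [map_add, map_one]
      linear_combination -(FR_rec lam n) + pihom lam X * E2 + E1 - E4
    refine small_div hint h1 h2 (p := X + 1) ?_ ?_ ?_
    · rw [show (1 : (ZMod 2)[X]) = C 1 from (Polynomial.C_1).symm]
      exact Polynomial.X_add_C_ne_zero 1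
    · rw [show (1 : (ZMod 2)[X]) = C 1 from (Polynomial.C_1).symm]
      rw [Polynomial.natDegree_X_add_C]
    · have := pihom_zero_dvd hx
      simpa using this
  · obtain ⟨E1, E2, _, E4⟩ := m22_entries hsh
    have hx : pihom lam (X - 1) = 0 := by
      rw [map_sub, map_one]
      linear_combination -(FR_rec lam n) + pihom lam X * E2 + E4 - E1
    refine small_div hint h1 h2 (p := X - 1) ?_ ?_ ?_
    · rw [show (1 : (ZMod 2)[X]) = C 1 from (Polynomial.C_1).symm]
      exact Polynomial.X_sub_C_ne_zero 1
    · rw [show (1 : (ZMod 2)[X]) = C 1 from (Polynomial.C_1).symm]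
      rw [Polynomial.natDegree_X_sub_C]
    · have := pihom_zero_dvd hx
      simpa using this
  · obtain ⟨E1, _, _, E4⟩ := m22_entries hsh
    have hx : pihom lam 1 = 0 := by
      rw [map_one]; linear_combination E1 - E4
    refine small_div hint h1 h2 (p := 1) one_ne_zero (by simp) ?_
    have := pihom_zero_dvd hx
    simpa using this
  · obtain ⟨E1, _, _, E4⟩ := m22_entries hsh
    have hx : pihom lam 1 = 0 := by
      rw [map_one]; linear_combination E1 - E4
    refine small_div hint h1 h2 (p := 1) one_ne_zero (by simp) ?_
    have := pihom_zero_dvd hx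
    simpa using this

end Stmt19Aux

open Stmt19Aux in
theorem stmt_19 :
    gEx ∈ Hecke 3 ∧ ∀ q : ℕ, 4 ≤ q → gEx ∉ Hecke q ∧ -gEx ∉ Hecke q := by
  constructor
  · have h3 : (2 * Real.cos (Real.pi / (3:ℕ)) : ℝ) = 1 := by
      norm_num [Real.cos_pi_div_three]
    have key : gEx = Smat * (Tmat 3)⁻¹ * Smat⁻¹ * Tmat 3 := by
      apply Subtype.ext
      simp only [Matrix.SpecialLinearGroup.coe_mul, Matrix.SpecialLinearGroup.coe_inv]
      show (!![1,1;1,2] : Matrix (Fin 2) (Fin 2) ℝ) = _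
      rw [show ((Tmat 3 : SL2) : Matrix (Fin 2) (Fin 2) ℝ) = !![1,1;0,1] by
        show !![1, 2 * Real.cos (Real.pi / (3:ℕ)); 0, 1] = _; rw [h3]]
      rw [show ((Smat : SL2) : Matrix (Fin 2) (Fin 2) ℝ) = !![0,1;-1,0] from rfl]
      rw [Matrix.adjugate_fin_two, Matrix.adjugate_fin_two]
      norm_num [Matrix.mul_fin_two]
    rw [key]
    have hS : Smat ∈ Hecke 3 := Subgroup.subset_closure (Set.mem_insert _ _)
    have hT : Tmat 3 ∈ Hecke 3 := Subgroup.subset_closure (Set.mem_insert_iff.mpr (Or.inr rfl))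
    exact mul_mem (mul_mem (mul_mem hS (inv_mem hT)) (inv_mem hS)) hT
  · intro q hq
    have hint := isIntegral_two_cos q (by omega)
    obtain ⟨h1, h2⟩ := bounds q hq
    have hHecke : Hecke q = Subgroup.closure {Smat, Tgen (2 * Real.cos (Real.pi / q))} := rfl
    constructor
    · intro hmem
      rw [hHecke] at hmem
      exact not_mem_closure hint h1 h2 1 1 1 2 (by norm_num) (by norm_num) (by norm_num)
        (by norm_num) (by norm_num [gEx]) hmem
    · intro hmem
      rw [hHecke] at hmem
      refine not_mem_closure hint h1 h2 (-1) (-1) (-1) (-2) (by decide) (by decide) (by decide)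
        (by decide) ?_ hmem
      show (-(gEx : Matrix (Fin 2) (Fin 2) ℝ)) = _
      norm_num [gEx]
end
end
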